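/- If (U, μ) and (V, ν) are Lefschetz algebras, then the tensor product W = U ⊗_ℝ V with element ω = μ⊗1 + 1⊗ν is a Lefschetz algebra. -/

import Mathlib

set_option maxHeartbeats 1600000
set_option synthInstance.maxHeartbeats 160000


open TensorProduct

/-- `l` is a (strong) Lefschetz element for the graded algebra `𝒜` with top degree `r`:
`l` has degree 1 and for all `0 ≤ i ≤ ⌊r/2⌋` multiplication by `l^(r-2i)` is a linear
isomorphism from the degree-`i` component onto the degree-`(r-i)` component. -/
def IsLefschetzElem {R : Type*} [CommRing R] [Algebra ℝ R]
    (𝒜 : ℕ → Submodule ℝ R) (r : ℕ) (l : R) : Prop :=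
  l ∈ 𝒜 1 ∧ ∀ i : ℕ, i ≤ r / 2 →
    (∀ w ∈ 𝒜 i, l ^ (r - 2 * i) * w = 0 → w = 0) ∧
      Submodule.map (LinearMap.mulLeft ℝ (l ^ (r - 2 * i))) (𝒜 i) = 𝒜 (r - i)

/-- The ℕ-graded Artinian ℝ-algebra conditions: `𝒜` is an algebra grading of `R`,
`R` is finite dimensional over ℝ, the degree zero part is `ℝ·1`, and all components
above the top degree `r` vanish (with the top component nonzero). -/
def IsGradedArtinian (R : Type*) [CommRing R] [Algebra ℝ R]
    (𝒜 : ℕ → Submodule ℝ R) (r : ℕ) [GradedAlgebra 𝒜] : Prop :=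
  FiniteDimensional ℝ R ∧ 𝒜 0 = Submodule.span ℝ {1} ∧ 𝒜 r ≠ ⊥ ∧ ∀ i, r < i → 𝒜 i = ⊥

/-- The grading on the tensor product `U ⊗[ℝ] V`: the degree-`k` component is spanned
by tensors of elements of degree `i` times elements of degree `j` with `i + j = k`. -/
noncomputable def tensorGrading {U V : Type*} [CommRing U] [Algebra ℝ U]
    [CommRing V] [Algebra ℝ V] (𝒜 : ℕ → Submodule ℝ U) (ℬ : ℕ → Submodule ℝ V) :
    ℕ → Submodule ℝ (U ⊗[ℝ] V) := fun k =>
  ⨆ i : ℕ, ⨆ j : ℕ, ⨆ _ : i + j = k,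
    LinearMap.range (TensorProduct.map (𝒜 i).subtype (ℬ j).subtype)

namespace LefschetzAux


variable {W : Type*} [AddCommGroup W] [Module ℝ W]

/-- Data of an sl₂-like pair of operators adapted to a grading. -/
structure Sl2Data (g : ℕ → Submodule ℝ W) (r : ℕ) (E F : W →ₗ[ℝ] W) : Prop where
  hE : ∀ m, ∀ w ∈ g m, E w ∈ g (m+1)
  hF : ∀ m, ∀ w ∈ g (m+1), F w ∈ g m
  hF0 : ∀ w ∈ g 0, F w = 0
  hcomm : ∀ m, ∀ w ∈ g m, E (F w) - F (E w) = ((2*(m:ℝ)) - r) • w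

variable {g : ℕ → Submodule ℝ W} {r : ℕ} {E F : W →ₗ[ℝ] W}

namespace Sl2Data

variable (h : Sl2Data g r E F)
include h

theorem Epow (n : ℕ) : ∀ m, ∀ w ∈ g m, (E^n) w ∈ g (m+n) := by
  induction n with
  | zero => intro m w hw; simpa using hw
  | succ n ih =>
    intro m w hw
    rw [pow_succ', Module.End.mul_apply]
    have := h.hE (m+n) _ (ih m w hw)
    simpa [Nat.add_assoc] using this

theorem Fpow (s : ℕ) : ∀ m, s ≤ m → ∀ w ∈ g m, (F^s) w ∈ g (m-s) := by
  induction s with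
  | zero => intro m _ w hw; simpa using hw
  | succ s ih =>
    intro m hs w hw
    rw [pow_succ', Module.End.mul_apply]
    have h1 : (F^s) w ∈ g (m - s) := ih m (by omega) w hw
    have h2 : m - s = (m - (s+1)) + 1 := by omega
    rw [h2] at h1
    exact h.hF _ _ h1

theorem Fdepth (m : ℕ) (w : W) (hw : w ∈ g m) : (F^(m+1)) w = 0 := by
  rw [pow_succ', Module.End.mul_apply]
  exact h.hF0 _ (by simpa using h.Fpow m m le_rfl w hw)

theorem string (m : ℕ) (p : W) (hp : p ∈ g m) (hFp : F p = 0) :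
    ∀ a : ℕ, F ((E^(a+1)) p) = (((a:ℝ)+1) * ((r:ℝ) - 2*m - a)) • (E^a) p := by
  intro a
  induction a with
  | zero =>
    have hc := h.hcomm m p hp
    rw [hFp, map_zero] at hc
    have h2 : F (E p) = -(((2*(m:ℝ)) - r) • p) := by rw [← hc]; abel
    rw [pow_one, h2, ← neg_smul]
    simp only [pow_zero, Module.End.one_apply]
    congr 1
    ring
  | succ a ih =>
    have hmem : (E^(a+1)) p ∈ g (m + (a+1)) := h.Epow (a+1) m p hp
    have hc := h.hcomm (m + (a+1)) _ hmem
    have h2 : F (E ((E^(a+1)) p)) = E (F ((E^(a+1)) p))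
        - ((2*((m + (a+1) : ℕ) : ℝ)) - r) • (E^(a+1)) p := by
      rw [← hc]; abel
    have h3 : (E^(a+1+1)) p = E ((E^(a+1)) p) := by
      rw [pow_succ', Module.End.mul_apply]
    rw [h3, h2, ih, map_smul]
    have h4 : ((E : W →ₗ[ℝ] W)) ((E^a) p) = (E^(a+1)) p := by
      rw [pow_succ', Module.End.mul_apply]
    rw [h4, ← sub_smul]
    congr 1
    push_cast; ring

theorem annihilate (m : ℕ) (p : W) (hp : p ∈ g m) (hFp : F p = 0) :
    ∀ n : ℕ, (F^(n+1)) ((E^n) p) = 0 := by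
  intro n
  induction n with
  | zero => simpa using hFp
  | succ n ih =>
    rw [pow_succ, Module.End.mul_apply, h.string m p hp hFp n, map_smul, ih, smul_zero]

theorem annihilate' (m : ℕ) (p : W) (hp : p ∈ g m) (hFp : F p = 0)
    (n s : ℕ) (hs : n + 1 ≤ s) : (F^s) ((E^n) p) = 0 := by
  have hss : s = (s - (n+1)) + (n+1) := by omega
  rw [hss, pow_add, Module.End.mul_apply, h.annihilate m p hp hFp n, map_zero]

theorem descend (m : ℕ) (p : W) (hp : p ∈ g m) (hFp : F p = 0) :
    ∀ n : ℕ, 2*m + n ≤ r → ∃ C : ℝ, C ≠ 0 ∧ (F^n) ((E^n) p) = C • p := by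
  intro n
  induction n with
  | zero => exact fun _ => ⟨1, one_ne_zero, by simp⟩
  | succ n ih =>
    intro hn
    obtain ⟨C, hC, hFE⟩ := ih (by omega)
    refine ⟨(((n:ℝ)+1) * ((r:ℝ) - 2*m - n)) * C, ?_, ?_⟩
    · have h2 : (0:ℝ) < (r:ℝ) - 2*m - n := by
        have : (2*m + n + 1 : ℝ) ≤ r := by exact_mod_cast hn
        linarith
      have h1 : (0:ℝ) < (n:ℝ)+1 := by positivity
      exact mul_ne_zero (by positivity) hC
    · rw [pow_succ, Module.End.mul_apply, h.string m p hp hFp n, map_smul, hFE, smul_smul]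

/-- Primitive decomposition: every element of `g i` is a sum of `E`-power images
of primitive (i.e. `F`-killed) homogeneous elements. -/
theorem primdec (i : ℕ) (h2i : 2*i ≤ r) :
    ∀ (j : ℕ) (v : W), v ∈ g i → (F^(j+1)) v = 0 →
      v ∈ ⨆ (a : ℕ) (_ : a ≤ i),
        Submodule.map (E^a : W →ₗ[ℝ] W) (g (i-a) ⊓ LinearMap.ker F) := by
  intro j
  induction j with
  | zero =>
    intro v hv hFv
    refine Submodule.mem_iSup_of_mem 0 (Submodule.mem_iSup_of_mem (Nat.zero_le i) ?_)
    refine Submodule.mem_map.2 ⟨v, ⟨by simpa using hv, by simpa using hFv⟩, by simp⟩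
  | succ j ih =>
    intro v hv hFv
    by_cases hw0 : (F^(j+1)) v = 0
    · exact ih v hv hw0
    have hji : j + 1 ≤ i := by
      by_contra hlt
      apply hw0
      have : j + 1 = (j - i) + (i + 1) := by omega
      rw [this, pow_add, Module.End.mul_apply, h.Fdepth i v hv, map_zero]
    set w := (F^(j+1)) v with hwdef
    have hwm : w ∈ g (i - (j+1)) := h.Fpow (j+1) i hji v hv
    have hFw : F w = 0 := by
      rw [hwdef, ← Module.End.mul_apply, ← pow_succ']
      exact hFv
    obtain ⟨C, hC, hFE⟩ := h.descend (i - (j+1)) w hwm hFw (j+1) (by omega)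
    set x := (E^(j+1)) w with hxdef
    have hv' : v - C⁻¹ • x ∈ g i := by
      refine Submodule.sub_mem _ hv (Submodule.smul_mem _ _ ?_)
      have := h.Epow (j+1) (i - (j+1)) w hwm
      have heq : i - (j+1) + (j+1) = i := by omega
      rwa [heq] at this
    have hF' : (F^(j+1)) (v - C⁻¹ • x) = 0 := by
      rw [map_sub, map_smul, hxdef, hFE, ← hwdef, smul_smul, inv_mul_cancel₀ hC, one_smul,
        sub_self]
    have hmem' := ih _ hv' hF'
    have hxmem : x ∈ ⨆ (a : ℕ) (_ : a ≤ i),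
        Submodule.map (E^a : W →ₗ[ℝ] W) (g (i-a) ⊓ LinearMap.ker F) := by
      refine Submodule.mem_iSup_of_mem (j+1) (Submodule.mem_iSup_of_mem hji ?_)
      exact Submodule.mem_map.2 ⟨w, ⟨hwm, hFw⟩, rfl⟩
    have : v = (v - C⁻¹ • x) + C⁻¹ • x := by abel
    rw [this]
    exact Submodule.add_mem _ hmem' (Submodule.smul_mem _ _ hxmem)

theorem kerpart (i : ℕ) (h2i : 2*i ≤ r) :
    ∀ (A : ℕ), A ≤ i → ∀ v ∈ (⨆ (a : ℕ) (_ : a ≤ A),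
        Submodule.map (E^a : W →ₗ[ℝ] W) (g (i-a) ⊓ LinearMap.ker F)),
      (E^(r-2*i)) v = 0 → v = 0 := by
  intro A
  induction A with
  | zero =>
    intro _ v hv hEv
    have hle : (⨆ (a : ℕ) (_ : a ≤ 0),
        Submodule.map (E^a : W →ₗ[ℝ] W) (g (i-a) ⊓ LinearMap.ker F)) ≤
        Submodule.map (E^0 : W →ₗ[ℝ] W) (g i ⊓ LinearMap.ker F) := by
      refine iSup_le fun a => iSup_le fun ha => ?_
      interval_cases a
      simp
    obtain ⟨p, ⟨hp, hFp⟩, rfl⟩ := Submodule.mem_map.1 (hle hv)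
    obtain ⟨C, hC, hFE⟩ := h.descend i p hp (by simpa using hFp) (r - 2*i) (by omega)
    simp only [pow_zero, Module.End.one_apply] at hEv ⊢
    have : (F^(r-2*i)) ((E^(r-2*i)) p) = 0 := by rw [hEv, map_zero]
    rw [hFE] at this
    have : p = 0 := by
      have := (smul_eq_zero.1 this).resolve_left hC
      exact this
    simpa using this
  | succ A ihA =>
    intro hA1 v hv hEv
    set k := r - 2*i with hk
    set T : ℕ → Submodule ℝ W :=
      fun a => Submodule.map (E^a : W →ₗ[ℝ] W) (g (i-a) ⊓ LinearMap.ker F) with hT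
    have hsplit : (⨆ (a : ℕ) (_ : a ≤ A+1), T a) = (⨆ (a : ℕ) (_ : a ≤ A), T a) ⊔ T (A+1) := by
      apply le_antisymm
      · refine iSup_le fun a => iSup_le fun ha => ?_
        rcases Nat.lt_or_ge a (A+1) with hlt | hge
        · exact le_sup_of_le_left (le_iSup_of_le a (le_iSup_of_le (by omega) le_rfl))
        · have : a = A+1 := by omega
          subst this; exact le_sup_right
      · refine sup_le (iSup_le fun a => iSup_le fun ha => ?_)
          (le_iSup_of_le (A+1) (le_iSup_of_le le_rfl le_rfl))
        exact le_iSup_of_le a (le_iSup_of_le (by omega) le_rfl)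
    rw [hsplit] at hv
    obtain ⟨v₁, hv₁, x, hx, rfl⟩ := Submodule.mem_sup.1 hv
    set L : W →ₗ[ℝ] W := (F^(k + (A+1))) ∘ₗ (E^k) with hL
    have hLv₁ : L v₁ = 0 := by
      have hker : (⨆ (a : ℕ) (_ : a ≤ A), T a) ≤ LinearMap.ker L := by
        refine iSup_le fun a => iSup_le fun ha => ?_
        rintro _ ⟨p, ⟨hp, hFp⟩, rfl⟩
        have hEE : (E^k) ((E^a) p) = (E^(k+a)) p := by
          rw [← Module.End.mul_apply, ← pow_add]
        simp only [LinearMap.mem_ker, hL, LinearMap.comp_apply]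
        rw [hEE]
        exact h.annihilate' (i-a) p hp (by simpa using hFp) (k + a) (k + (A+1)) (by omega)
      simpa using hker hv₁
    obtain ⟨p, ⟨hp, hFp⟩, rfl⟩ := Submodule.mem_map.1 hx
    have hLx : L ((E^(A+1)) p) = (F^(k+(A+1))) ((E^(k+(A+1))) p) := by
      have hEE : (E^k) ((E^(A+1)) p) = (E^(k+(A+1))) p := by
        rw [← Module.End.mul_apply, ← pow_add]
      simp only [hL, LinearMap.comp_apply]
      rw [hEE]
    obtain ⟨C, hC, hFE⟩ := h.descend (i - (A+1)) p hp (by simpa using hFp) (k + (A+1)) (by omega)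
    have hLsum : L (v₁ + (E^(A+1)) p) = 0 := by
      simp only [hL, LinearMap.comp_apply]
      rw [hEv, map_zero]
    rw [map_add, hLv₁, zero_add, hLx, hFE] at hLsum
    have hp0 : p = 0 := (smul_eq_zero.1 hLsum).resolve_left hC
    subst hp0
    simp only [map_zero, add_zero] at hEv ⊢
    exact ihA (by omega) v₁ hv₁ hEv

/-- The core hard-Lefschetz injectivity statement. -/
theorem core_inj (i : ℕ) (h2i : 2*i ≤ r) (v : W) (hv : v ∈ g i)
    (hEv : (E^(r-2*i)) v = 0) : v = 0 := by
  have hpd := h.primdec i h2i i v hv (h.Fdepth i v hv)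
  exact h.kerpart i h2i i le_rfl v hpd hEv

end Sl2Data



variable {U : Type*} [CommRing U] [Algebra ℝ U]

/-- Projection onto the degree-`n` component of a graded algebra, as a linear map. -/
noncomputable def gproj (𝒜 : ℕ → Submodule ℝ U) [GradedAlgebra 𝒜] (n : ℕ) :
    U →ₗ[ℝ] ↥(𝒜 n) :=
  (DirectSum.component ℝ ℕ (fun i => ↥(𝒜 i)) n).comp
    (DirectSum.decomposeLinearEquiv 𝒜).toLinearMap

theorem gproj_same {𝒜 : ℕ → Submodule ℝ U} [GradedAlgebra 𝒜] {n : ℕ} {z : U}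
    (hz : z ∈ 𝒜 n) : gproj 𝒜 n z = ⟨z, hz⟩ := by
  apply Subtype.ext
  show ((DirectSum.decompose 𝒜 z) n : U) = z
  exact DirectSum.decompose_of_mem_same 𝒜 hz

theorem gproj_ne {𝒜 : ℕ → Submodule ℝ U} [GradedAlgebra 𝒜] {n j : ℕ} {z : U}
    (hz : z ∈ 𝒜 j) (hne : j ≠ n) : gproj 𝒜 n z = 0 := by
  apply Subtype.ext
  show ((DirectSum.decompose 𝒜 z) n : U) = 0
  exact DirectSum.decompose_of_mem_ne 𝒜 hz hne

section Construct

variable {𝒜 : ℕ → Submodule ℝ U} [GradedAlgebra 𝒜] {r : ℕ} {μ : U}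

/-- Existence of the sl₂ lowering operator for a Lefschetz algebra. -/
theorem exists_lowering (hμ : IsLefschetzElem 𝒜 r μ) (htop : ∀ i, r < i → 𝒜 i = ⊥) :
    ∃ F : U →ₗ[ℝ] U,
      (∀ m, ∀ u ∈ 𝒜 (m+1), F u ∈ 𝒜 m) ∧ (∀ u ∈ 𝒜 0, F u = 0) ∧
      (∀ m, ∀ u ∈ 𝒜 m, μ * (F u) - F (μ * u) = ((2*(m:ℝ)) - r) • u) := by
  have hpow_mem : ∀ n : ℕ, μ^n ∈ 𝒜 n := fun n => by
    simpa using SetLike.pow_mem_graded n hμ.1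
  have hmul_mem : ∀ (n i : ℕ), ∀ u ∈ 𝒜 i, μ^n * u ∈ 𝒜 (n + i) := fun n i u hu =>
    SetLike.mul_mem_graded (hpow_mem n) hu
  have hdiv : ∀ i : ℕ, 2*i ≤ r → i ≤ r/2 := fun i hi => by
    rw [Nat.le_div_iff_mul_le (by norm_num)]; omega
  have hinj : ∀ i, 2*i ≤ r → ∀ u ∈ 𝒜 i, μ^(r-2*i) * u = 0 → u = 0 :=
    fun i hi => (hμ.2 i (hdiv i hi)).1
  have hsurj : ∀ i, 2*i ≤ r → ∀ y ∈ 𝒜 (r - i), ∃ x ∈ 𝒜 i, μ^(r-2*i) * x = y := by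
    intro i hi y hy
    rw [← (hμ.2 i (hdiv i hi)).2] at hy
    obtain ⟨x, hx, hxy⟩ := Submodule.mem_map.1 hy
    exact ⟨x, hx, by simpa [LinearMap.mulLeft_apply] using hxy⟩
  -- step 1 : the "partial inverse" maps τ
  have hτex : ∀ m : ℕ, ∃ τ : U →ₗ[ℝ] U,
      (∀ z : U, τ z ∈ 𝒜 m) ∧
      (∀ j, j ≠ m+1 → ∀ z ∈ 𝒜 j, τ z = 0) ∧
      (2*(m+1) ≤ r → ∀ z ∈ 𝒜 (m+1), μ^(r - 2*(m+1) + 1) * (z - μ * τ z) = 0) ∧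
      (r < 2*(m+1) → ∀ z ∈ 𝒜 (m+1), μ * τ z = z) := by
    intro m
    set j := m + 1 with hjdef
    rcases le_or_gt (2*j) r with hj2 | hj1
    · -- case 2(m+1) ≤ r : use the Lefschetz structure in degrees m, m+1
      set κ := r - 2*j with hκdef
      have hmap1 : ∀ x ∈ 𝒜 m, (LinearMap.mulLeft ℝ (μ^(κ+2))) x ∈ 𝒜 (r - j + 1) := by
        intro x hx
        have := hmul_mem (κ+2) m x hx
        rwa [show (κ+2) + m = r - j + 1 by omega] at this
      set f₀ : ↥(𝒜 m) →ₗ[ℝ] ↥(𝒜 (r - j + 1)) :=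
        (LinearMap.mulLeft ℝ (μ^(κ+2))).restrict hmap1 with hf₀
      have hbij : Function.Bijective f₀ := by
        constructor
        · intro x y hxy
          apply Subtype.ext
          have h1 : μ^(κ+2) * ((x:U) - y) = 0 := by
            have := congrArg (Subtype.val) hxy
            simp only [hf₀, LinearMap.restrict_coe_apply, LinearMap.mulLeft_apply] at this
            rw [mul_sub, this, sub_self]
          have h2 : (x:U) - y ∈ 𝒜 m := Submodule.sub_mem _ x.2 y.2
          have h3 := hinj m (by omega) _ h2 (by rwa [show r - 2*m = κ+2 by omega])
          exact sub_eq_zero.1 h3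
        · intro y
          obtain ⟨x, hx, hxy⟩ := hsurj m (by omega)
            (y : U) (by rw [show r - m = r - j + 1 by omega]; exact y.2)
          refine ⟨⟨x, hx⟩, ?_⟩
          apply Subtype.ext
          simp only [hf₀, LinearMap.restrict_coe_apply, LinearMap.mulLeft_apply]
          rwa [show κ+2 = r - 2*m by omega]
      set Φ := LinearEquiv.ofBijective f₀ hbij with hΦ
      have hmap2 : ∀ x ∈ 𝒜 j, (LinearMap.mulLeft ℝ (μ^(κ+1))) x ∈ 𝒜 (r - j + 1) := by
        intro x hx
        have := hmul_mem (κ+1) j x hx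
        rwa [show (κ+1) + j = r - j + 1 by omega] at this
      set q : ↥(𝒜 j) →ₗ[ℝ] ↥(𝒜 (r - j + 1)) :=
        (LinearMap.mulLeft ℝ (μ^(κ+1))).restrict hmap2 with hq
      refine ⟨(𝒜 m).subtype ∘ₗ (Φ.symm.toLinearMap) ∘ₗ q ∘ₗ gproj 𝒜 j, ?_, ?_, ?_, ?_⟩
      · intro z; exact (Φ.symm (q (gproj 𝒜 j z))).2
      · intro j' hj' z hz
        simp only [LinearMap.comp_apply, gproj_ne hz hj', map_zero,
          Submodule.coe_subtype, ZeroMemClass.coe_zero]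
      · intro _ z hz
        simp only [LinearMap.comp_apply, gproj_same hz, Submodule.coe_subtype,
          LinearEquiv.coe_coe]
        have hΦΦ : (f₀ (Φ.symm (q ⟨z, hz⟩)) : U) = (q ⟨z, hz⟩ : U) := by
          rw [show f₀ (Φ.symm (q ⟨z, hz⟩)) = Φ (Φ.symm (q ⟨z, hz⟩)) from rfl,
            LinearEquiv.apply_symm_apply]
        simp only [hf₀, LinearMap.restrict_coe_apply, LinearMap.mulLeft_apply] at hΦΦ
        have hqz : (q ⟨z, hz⟩ : U) = μ^(κ+1) * z := by
          simp only [hq, LinearMap.restrict_coe_apply, LinearMap.mulLeft_apply]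
        rw [hqz] at hΦΦ
        rw [show r - 2*(m+1) + 1 = κ + 1 by omega]
        rw [mul_sub]
        rw [show μ^(κ+1) * (μ * ((Φ.symm (q ⟨z, hz⟩)) : U)) = μ^(κ+2) * ((Φ.symm (q ⟨z, hz⟩)) : U) by
          rw [← mul_assoc, ← pow_succ]]
        rw [hΦΦ, sub_self]
      · intro hcon; omega
    · rcases le_or_gt j r with hjr | hjr
      · -- case 2(m+1) > r, m+1 ≤ r : E is invertible from degree r-j up to degree j
        set s := 2*j - r with hsdef
        set i0 := r - j with hi0def
        have hmap3 : ∀ x ∈ 𝒜 i0, (LinearMap.mulLeft ℝ (μ^s)) x ∈ 𝒜 j := by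
          intro x hx
          have := hmul_mem s i0 x hx
          rwa [show s + i0 = j by omega] at this
        set f₁ : ↥(𝒜 i0) →ₗ[ℝ] ↥(𝒜 j) := (LinearMap.mulLeft ℝ (μ^s)).restrict hmap3 with hf₁
        have hbij : Function.Bijective f₁ := by
          constructor
          · intro x y hxy
            apply Subtype.ext
            have h1 : μ^s * ((x:U) - y) = 0 := by
              have := congrArg (Subtype.val) hxy
              simp only [hf₁, LinearMap.restrict_coe_apply, LinearMap.mulLeft_apply] at this
              rw [mul_sub, this, sub_self]
            have h2 : (x:U) - y ∈ 𝒜 i0 := Submodule.sub_mem _ x.2 y.2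
            have h3 := hinj i0 (by omega) _ h2 (by rwa [show r - 2*i0 = s by omega])
            exact sub_eq_zero.1 h3
          · intro y
            obtain ⟨x, hx, hxy⟩ := hsurj i0 (by omega)
              (y : U) (by rw [show r - i0 = j by omega]; exact y.2)
            refine ⟨⟨x, hx⟩, ?_⟩
            apply Subtype.ext
            simp only [hf₁, LinearMap.restrict_coe_apply, LinearMap.mulLeft_apply]
            rwa [show s = r - 2*i0 by omega]
        set Θ := LinearEquiv.ofBijective f₁ hbij with hΘ
        have hmap4 : ∀ x ∈ 𝒜 i0, (LinearMap.mulLeft ℝ (μ^(s-1))) x ∈ 𝒜 m := by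
          intro x hx
          have := hmul_mem (s-1) i0 x hx
          rwa [show (s-1) + i0 = m by omega] at this
        set q1 : ↥(𝒜 i0) →ₗ[ℝ] ↥(𝒜 m) := (LinearMap.mulLeft ℝ (μ^(s-1))).restrict hmap4
          with hq1
        refine ⟨(𝒜 m).subtype ∘ₗ q1 ∘ₗ (Θ.symm.toLinearMap) ∘ₗ gproj 𝒜 j, ?_, ?_, ?_, ?_⟩
        · intro z; exact (q1 (Θ.symm (gproj 𝒜 j z))).2
        · intro j' hj' z hz
          simp only [LinearMap.comp_apply, gproj_ne hz hj', map_zero,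
            Submodule.coe_subtype, ZeroMemClass.coe_zero]
        · intro hcon; omega
        · intro _ z hz
          simp only [LinearMap.comp_apply, gproj_same hz, Submodule.coe_subtype,
            LinearEquiv.coe_coe]
          have hq1z : (q1 (Θ.symm ⟨z, hz⟩) : U) = μ^(s-1) * ((Θ.symm ⟨z, hz⟩ : U)) := by
            simp only [hq1, LinearMap.restrict_coe_apply, LinearMap.mulLeft_apply]
          rw [hq1z, ← mul_assoc]
          have hμs : μ * μ^(s-1) = μ^s := by
            rw [← pow_succ']
            congr 1
            omega
          rw [hμs]
          have hΘΘ : (f₁ (Θ.symm ⟨z, hz⟩) : U) = z := by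
            rw [show f₁ (Θ.symm ⟨z, hz⟩) = Θ (Θ.symm ⟨z, hz⟩) from rfl,
              LinearEquiv.apply_symm_apply]
          simpa only [hf₁, LinearMap.restrict_coe_apply, LinearMap.mulLeft_apply] using hΘΘ
      · -- case m+1 > r : everything vanishes
        refine ⟨0, by simp, by simp, fun hcon => by omega, ?_⟩
        intro _ z hz
        have : 𝒜 j = ⊥ := htop j hjr
        rw [this] at hz
        simp only [Submodule.mem_bot] at hz
        subst hz
        simp
  choose τ hτmem hτne hτ2 hτ3 using hτex
  -- step 2 : the recursively defined lowering maps
  let G : ℕ → (U →ₗ[ℝ] U) := fun n => Nat.rec 0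
    (fun m Gm => ((LinearMap.mulLeft ℝ μ) ∘ₗ Gm
      - ((2*(m:ℝ)) - r) • LinearMap.id) ∘ₗ (τ m)) n
  have hG0 : ∀ z : U, G 0 z = 0 := fun _ => rfl
  have hGs : ∀ m (z : U), G (m+1) z = μ * (G m (τ m z)) - ((2*(m:ℝ)) - r) • (τ m z) :=
    fun m z => rfl
  have hGmem : ∀ m (z : U), G (m+1) z ∈ 𝒜 m := by
    intro m
    induction m with
    | zero =>
      intro z
      rw [hGs, hG0, mul_zero, zero_sub]
      exact Submodule.neg_mem _ (Submodule.smul_mem _ _ (hτmem 0 z))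
    | succ m ih =>
      intro z
      rw [hGs (m+1) z]
      refine Submodule.sub_mem _ ?_ (Submodule.smul_mem _ _ (hτmem (m+1) z))
      have h2 := SetLike.mul_mem_graded hμ.1 (ih (τ (m+1) z))
      rwa [Nat.add_comm] at h2
  have hGzero : ∀ m j (z : U), z ∈ 𝒜 j → j ≠ m+1 → G (m+1) z = 0 := by
    intro m j z hz hne
    rw [hGs m z, hτne m j hne z hz]
    simp
  -- step 3 : τ is a genuine section below the middle
  have hR1 : ∀ m, 2*(m+1) ≤ r → ∀ u ∈ 𝒜 m, τ m (μ * u) = u := by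
    intro m hm u hu
    have hz : μ * u ∈ 𝒜 (m+1) := by
      have := SetLike.mul_mem_graded hμ.1 hu; rwa [Nat.add_comm] at this
    have h2 := hτ2 m hm (μ*u) hz
    have hmem : u - τ m (μ*u) ∈ 𝒜 m := Submodule.sub_mem _ hu (hτmem m _)
    have h3 : μ^(r - 2*m) * (u - τ m (μ*u)) = 0 := by
      have hrw : μ^(r-2*m) = μ^(r - 2*(m+1) + 1) * μ := by
        rw [← pow_succ]; congr 1; omega
      rw [hrw, mul_assoc, mul_sub μ u _]
      exact h2
    exact (sub_eq_zero.1 (hinj m (by omega) _ hmem h3)).symm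
  -- step 4 : the key invariant
  have hINV : ∀ m, ∀ t : ℕ, 1 ≤ t → ∀ z ∈ 𝒜 m, μ^t * z = 0 →
      μ^t * (G m z) = ((t:ℝ) * (2*(m:ℝ) - r + t - 1)) • (μ^(t-1) * z) := by
    intro m
    induction m with
    | zero =>
      intro t ht z hz hzt
      rw [hG0, mul_zero]
      symm
      rcases le_or_gt t r with htr | htr
      · have hz0 : z = 0 := by
          apply hinj 0 (by omega) z hz
          rw [show r - 2*0 = (r - t) + t by omega, pow_add, mul_assoc, hzt, mul_zero]
        rw [hz0, mul_zero, smul_zero]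
      · rcases eq_or_lt_of_le (Nat.succ_le_of_lt htr) with hteq | htgt
        · have hco : ((t:ℝ) * (2*((0:ℕ):ℝ) - r + t - 1)) = 0 := by
            rw [← hteq]; push_cast; ring
          rw [hco, zero_smul]
        · have hmem := hmul_mem (t-1) 0 z hz
          rw [htop (t-1+0) (by omega)] at hmem
          rw [(Submodule.mem_bot ℝ).1 hmem, smul_zero]
    | succ m ih =>
      intro t ht z hz hzt
      have hu' : τ m z ∈ 𝒜 m := hτmem m z
      rcases le_or_gt (2*(m+1)) r with hc | hc
      · rcases le_or_gt t (r - 2*(m+1)) with htκ | htκ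
        · have hz0 : z = 0 := by
            apply hinj (m+1) (by omega) z hz
            rw [show r - 2*(m+1) = (r - 2*(m+1) - t) + t by omega, pow_add, mul_assoc,
              hzt, mul_zero]
          rw [hz0]
          simp
        · -- main case below the middle
          have hp : μ^(r - 2*(m+1) + 1) * (z - μ * τ m z) = 0 := hτ2 m hc z hz
          have hpt : μ^t * (z - μ * τ m z) = 0 := by
            rw [show t = (t - (r - 2*(m+1) + 1)) + (r - 2*(m+1) + 1) by omega, pow_add,
              mul_assoc, hp, mul_zero]
          have hu't : μ^(t+1) * τ m z = 0 := by
            have h5 : μ^t * (μ * τ m z) = μ^t * z - μ^t * (z - μ * τ m z) := by ring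
            rw [pow_succ, mul_assoc, h5, hzt, hpt, sub_zero]
          have hIH := ih (t+1) (by omega) (τ m z) hu' hu't
          simp only [Nat.add_sub_cancel] at hIH
          have hL : μ^t * (G (m+1) z)
              = ((((t:ℝ)+1) * (2*(m:ℝ) - r + t) - ((2*(m:ℝ)) - r))) • (μ^t * τ m z) := by
            rw [hGs m z, mul_sub, mul_smul_comm, ← mul_assoc, ← pow_succ, hIH, ← sub_smul]
            congr 1
            push_cast
            ring
          rw [hL]
          have hzz : z = (z - μ * τ m z) + μ * τ m z := by ring
          have hsplit : μ^(t-1) * z = μ^(t-1) * (z - μ * τ m z) + μ^t * τ m z := by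
            nth_rewrite 1 [hzz]
            rw [mul_add, ← mul_assoc, ← pow_succ, show t-1+1 = t by omega]
          rw [hsplit, smul_add]
          have hkill : ((t:ℝ) * (2*((m+1:ℕ):ℝ) - r + t - 1)) • (μ^(t-1) * (z - μ * τ m z)) = 0 := by
            rcases eq_or_lt_of_le (Nat.succ_le_of_lt htκ) with hteq | htgt
            · have h7 : (r:ℝ) + 1 = 2*((m+1:ℕ):ℝ) + t := by
                exact_mod_cast congrArg (Nat.cast : ℕ → ℝ) (show r + 1 = 2*(m+1) + t by omega)
              have hco : ((t:ℝ) * (2*((m+1:ℕ):ℝ) - r + t - 1)) = 0 := by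
                rw [show 2*((m+1:ℕ):ℝ) - r + t - 1 = 0 from by linarith]
                ring
              rw [hco, zero_smul]
            · have : μ^(t-1) * (z - μ * τ m z) = 0 := by
                rw [show t - 1 = (t - 1 - (r - 2*(m+1) + 1)) + (r - 2*(m+1) + 1) by omega,
                  pow_add, mul_assoc, hp, mul_zero]
              rw [this, smul_zero]
          rw [hkill, zero_add]
          congr 1
          push_cast
          ring
      · rcases le_or_gt (m+1) r with hmr | hmr
        · have hμτ : μ * τ m z = z := hτ3 m hc z hz
          have hu't : μ^(t+1) * τ m z = 0 := by
            rw [pow_succ, mul_assoc, hμτ, hzt]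
          have hIH := ih (t+1) (by omega) (τ m z) hu' hu't
          simp only [Nat.add_sub_cancel] at hIH
          have hL : μ^t * (G (m+1) z)
              = ((((t:ℝ)+1) * (2*(m:ℝ) - r + t) - ((2*(m:ℝ)) - r))) • (μ^t * τ m z) := by
            rw [hGs m z, mul_sub, mul_smul_comm, ← mul_assoc, ← pow_succ, hIH, ← sub_smul]
            congr 1
            push_cast
            ring
          rw [hL]
          have hsplit : μ^(t-1) * z = μ^t * τ m z := by
            conv_lhs => rw [← hμτ]
            rw [← mul_assoc, ← pow_succ, show t-1+1 = t by omega]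
          rw [hsplit]
          congr 1
          push_cast
          ring
        · have : 𝒜 (m+1) = ⊥ := htop (m+1) hmr
          rw [this] at hz
          rw [(Submodule.mem_bot ℝ).1 hz]
          simp
  -- step 5 : the commutator identity
  have hCOMM : ∀ m, ∀ u ∈ 𝒜 m, μ * (G m u) - G (m+1) (μ * u) = ((2*(m:ℝ)) - r) • u := by
    intro m u hu
    have hz : μ * u ∈ 𝒜 (m+1) := by
      have := SetLike.mul_mem_graded hμ.1 hu; rwa [Nat.add_comm] at this
    rcases le_or_gt (2*(m+1)) r with hc | hc
    · rw [hGs m (μ*u), hR1 m hc u hu]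
      abel
    · rcases le_or_gt (m+1) r with hmr | hmr
      · have hμw : μ * τ m (μ*u) = μ * u := hτ3 m hc (μ*u) hz
        set y := τ m (μ*u) - u with hy
        have hz₀m : y ∈ 𝒜 m := Submodule.sub_mem _ (hτmem m _) hu
        have hμz₀ : μ^1 * y = 0 := by
          rw [pow_one, hy, mul_sub, hμw, sub_self]
        have hi := hINV m 1 le_rfl _ hz₀m hμz₀
        rw [show (1:ℕ)-1 = 0 from rfl, pow_zero, pow_one, one_mul] at hi
        have hi' : μ * (G m y) = ((2*(m:ℝ)) - r) • y := by
          rw [hi]; congr 1; push_cast; ring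
        have hwu : τ m (μ*u) = u + y := by rw [hy]; ring
        rw [hGs m (μ*u), hwu, map_add, mul_add, hi', smul_add]
        abel
      · have hμu0 : μ * u = 0 := by
          have h6 := hz
          rw [htop (m+1) hmr] at h6
          exact (Submodule.mem_bot ℝ).1 h6
        rw [hμu0, map_zero, sub_zero]
        have hi := hINV m 1 le_rfl u hu (by simpa using hμu0)
        rw [show (1:ℕ)-1 = 0 from rfl, pow_zero, pow_one, one_mul] at hi
        rw [hi]
        congr 1
        push_cast
        ring
  -- step 6 : assemble
  refine ⟨∑ k ∈ Finset.range (r+2), G k, ?_, ?_, ?_⟩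
  · intro m u hu
    rcases le_or_gt (m+1) (r+1) with hmr | hmr
    · have hval : (∑ k ∈ Finset.range (r+2), G k) u = G (m+1) u := by
        rw [LinearMap.sum_apply, Finset.sum_eq_single (m+1)]
        · intro k _ hkn
          cases k with
          | zero => exact hG0 u
          | succ k' => exact hGzero k' (m+1) u hu (Ne.symm hkn)
        · intro hnmem; exact absurd (Finset.mem_range.2 (by omega)) hnmem
      rw [hval]
      exact hGmem m u
    · have : 𝒜 (m+1) = ⊥ := htop (m+1) (by omega)
      rw [this] at hu
      rw [(Submodule.mem_bot ℝ).1 hu, map_zero]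
      exact Submodule.zero_mem _
  · intro u hu
    rw [LinearMap.sum_apply, Finset.sum_eq_zero]
    intro k hk
    cases k with
    | zero => exact hG0 u
    | succ k' => exact hGzero k' 0 u hu (by omega)
  · intro m u hu
    rcases le_or_gt m r with hmr | hmr
    · have hz : μ * u ∈ 𝒜 (m+1) := by
        have := SetLike.mul_mem_graded hμ.1 hu; rwa [Nat.add_comm] at this
      have hval1 : (∑ k ∈ Finset.range (r+2), G k) u = G m u := by
        rw [LinearMap.sum_apply, Finset.sum_eq_single m]
        · intro k _ hkn
          cases k with
          | zero => exact hG0 u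
          | succ k' => exact hGzero k' m u hu (Ne.symm hkn)
        · intro hnmem; exact absurd (Finset.mem_range.2 (by omega)) hnmem
      have hval2 : (∑ k ∈ Finset.range (r+2), G k) (μ * u) = G (m+1) (μ * u) := by
        rw [LinearMap.sum_apply, Finset.sum_eq_single (m+1)]
        · intro k _ hkn
          cases k with
          | zero => exact hG0 (μ * u)
          | succ k' => exact hGzero k' (m+1) (μ*u) hz (Ne.symm hkn)
        · intro hnmem; exact absurd (Finset.mem_range.2 (by omega)) hnmem
      rw [hval1, hval2]
      exact hCOMM m u hu
    · have : 𝒜 m = ⊥ := htop m hmr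
      rw [this] at hu
      rw [(Submodule.mem_bot ℝ).1 hu]
      simp

end Construct


section Flip

variable {U : Type*} [CommRing U] [Algebra ℝ U]
variable {𝒜 : ℕ → Submodule ℝ U} [GradedAlgebra 𝒜] {r : ℕ} {μ : U}

theorem map_agree {M N : Type*} [AddCommGroup M] [Module ℝ M] [AddCommGroup N] [Module ℝ N]
    {f g : M →ₗ[ℝ] N} {p : Submodule ℝ M} (h : ∀ x ∈ p, f x = g x) :
    Submodule.map f p = Submodule.map g p := by
  ext x
  simp only [Submodule.mem_map]
  constructor
  · rintro ⟨y, hy, rfl⟩; exact ⟨y, hy, (h y hy).symm⟩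
  · rintro ⟨y, hy, rfl⟩; exact ⟨y, hy, h y hy⟩

/-- Existence of a degree-flipping endomorphism carrying `𝒜 i` onto `𝒜 (r-i)`. -/
theorem exists_flip (hμ : IsLefschetzElem 𝒜 r μ) (htop : ∀ i, r < i → 𝒜 i = ⊥) :
    ∃ ψ : U →ₗ[ℝ] U, ∀ i, i ≤ r → Submodule.map ψ (𝒜 i) = 𝒜 (r - i) := by
  have hpow_mem : ∀ n : ℕ, μ^n ∈ 𝒜 n := fun n => by
    simpa using SetLike.pow_mem_graded n hμ.1
  have hmul_mem : ∀ (n i : ℕ), ∀ u ∈ 𝒜 i, μ^n * u ∈ 𝒜 (n + i) := fun n i u hu =>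
    SetLike.mul_mem_graded (hpow_mem n) hu
  have hdiv : ∀ i : ℕ, 2*i ≤ r → i ≤ r/2 := fun i hi => by
    rw [Nat.le_div_iff_mul_le (by norm_num)]; omega
  have hinj : ∀ i, 2*i ≤ r → ∀ u ∈ 𝒜 i, μ^(r-2*i) * u = 0 → u = 0 :=
    fun i hi => (hμ.2 i (hdiv i hi)).1
  have hsurj : ∀ i, 2*i ≤ r → ∀ y ∈ 𝒜 (r - i), ∃ x ∈ 𝒜 i, μ^(r-2*i) * x = y := by
    intro i hi y hy
    rw [← (hμ.2 i (hdiv i hi)).2] at hy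
    obtain ⟨x, hx, hxy⟩ := Submodule.mem_map.1 hy
    exact ⟨x, hx, by simpa [LinearMap.mulLeft_apply] using hxy⟩
  have hex : ∀ i : ℕ, ∃ ψi : U →ₗ[ℝ] U,
      (∀ j z, z ∈ 𝒜 j → j ≠ i → ψi z = 0) ∧
      (i ≤ r → Submodule.map ψi (𝒜 i) = 𝒜 (r - i)) := by
    intro i
    rcases le_or_gt (2*i) r with h2 | h2
    · refine ⟨LinearMap.mulLeft ℝ (μ^(r-2*i)) ∘ₗ ((𝒜 i).subtype ∘ₗ gproj 𝒜 i), ?_, ?_⟩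
      · intro j z hz hne
        simp [LinearMap.comp_apply, gproj_ne hz hne]
      · intro _
        have hagree : ∀ z ∈ 𝒜 i,
            (LinearMap.mulLeft ℝ (μ^(r-2*i)) ∘ₗ ((𝒜 i).subtype ∘ₗ gproj 𝒜 i)) z
              = (LinearMap.mulLeft ℝ (μ^(r-2*i))) z := by
          intro z hz
          simp [LinearMap.comp_apply, gproj_same hz]
        rw [map_agree hagree, (hμ.2 i (hdiv i h2)).2]
    · rcases le_or_gt i r with hir | hir
      · have hmap3 : ∀ x ∈ 𝒜 (r-i), (LinearMap.mulLeft ℝ (μ^(2*i-r))) x ∈ 𝒜 i := by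
          intro x hx
          have := hmul_mem (2*i-r) (r-i) x hx
          rwa [show (2*i-r) + (r-i) = i by omega] at this
        set f₁ : ↥(𝒜 (r-i)) →ₗ[ℝ] ↥(𝒜 i) :=
          (LinearMap.mulLeft ℝ (μ^(2*i-r))).restrict hmap3 with hf₁
        have hbij : Function.Bijective f₁ := by
          constructor
          · intro x y hxy
            apply Subtype.ext
            have h1 : μ^(2*i-r) * ((x:U) - y) = 0 := by
              have := congrArg (Subtype.val) hxy
              simp only [hf₁, LinearMap.restrict_coe_apply, LinearMap.mulLeft_apply] at this
              rw [mul_sub, this, sub_self]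
            have h2 : (x:U) - y ∈ 𝒜 (r-i) := Submodule.sub_mem _ x.2 y.2
            have h3 := hinj (r-i) (by omega) _ h2 (by rwa [show r - 2*(r-i) = 2*i-r by omega])
            exact sub_eq_zero.1 h3
          · intro y
            obtain ⟨x, hx, hxy⟩ := hsurj (r-i) (by omega)
              (y : U) (by rw [show r - (r-i) = i by omega]; exact y.2)
            refine ⟨⟨x, hx⟩, ?_⟩
            apply Subtype.ext
            simp only [hf₁, LinearMap.restrict_coe_apply, LinearMap.mulLeft_apply]
            rwa [show 2*i-r = r - 2*(r-i) by omega]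
        set Θ := LinearEquiv.ofBijective f₁ hbij with hΘ
        refine ⟨(𝒜 (r-i)).subtype ∘ₗ (Θ.symm.toLinearMap) ∘ₗ gproj 𝒜 i, ?_, ?_⟩
        · intro j z hz hne
          simp [LinearMap.comp_apply, gproj_ne hz hne]
        · intro _
          apply le_antisymm
          · rintro x ⟨z, hz, rfl⟩
            simp only [LinearMap.comp_apply, gproj_same hz, Submodule.coe_subtype,
              LinearEquiv.coe_coe]
            exact (Θ.symm ⟨z, hz⟩).2
          · intro y hy
            refine Submodule.mem_map.2 ⟨(f₁ ⟨y, hy⟩ : U), (f₁ ⟨y, hy⟩).2, ?_⟩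
            have hval : gproj 𝒜 i ((f₁ ⟨y, hy⟩ : U)) = f₁ ⟨y, hy⟩ := gproj_same (f₁ ⟨y, hy⟩).2
            simp only [LinearMap.comp_apply, hval, Submodule.coe_subtype, LinearEquiv.coe_coe]
            rw [show (f₁ ⟨y, hy⟩ : ↥(𝒜 i)) = Θ ⟨y, hy⟩ from rfl, LinearEquiv.symm_apply_apply]
      · exact ⟨0, fun j z _ _ => rfl, fun h => absurd h (by omega)⟩
  choose ψ' hψne hψmap using hex
  refine ⟨∑ k ∈ Finset.range (r+1), ψ' k, ?_⟩
  intro i hir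
  have hagree : ∀ z ∈ 𝒜 i, (∑ k ∈ Finset.range (r+1), ψ' k) z = (ψ' i) z := by
    intro z hz
    rw [LinearMap.sum_apply, Finset.sum_eq_single i]
    · intro k _ hki
      exact hψne k i z hz (Ne.symm hki)
    · intro hmem
      exact absurd (Finset.mem_range.2 (by omega)) hmem
  rw [map_agree hagree]
  exact hψmap i hir

end Flip

section Tensor

variable {U V : Type*} [CommRing U] [Algebra ℝ U] [CommRing V] [Algebra ℝ V]
variable {𝒜 : ℕ → Submodule ℝ U} {ℬ : ℕ → Submodule ℝ V}

theorem tmul_mem_tg {i j k : ℕ} (hij : i + j = k) {u : U} {v : V}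
    (hu : u ∈ 𝒜 i) (hv : v ∈ ℬ j) : u ⊗ₜ[ℝ] v ∈ tensorGrading 𝒜 ℬ k := by
  refine Submodule.mem_iSup_of_mem i (Submodule.mem_iSup_of_mem j
    (Submodule.mem_iSup_of_mem hij ?_))
  exact ⟨(⟨u, hu⟩ : ↥(𝒜 i)) ⊗ₜ[ℝ] (⟨v, hv⟩ : ↥(ℬ j)), by simp⟩

theorem tg_le {P : Submodule ℝ (U ⊗[ℝ] V)} {k : ℕ}
    (h : ∀ i j, i + j = k → ∀ (a : ↥(𝒜 i)) (b : ↥(ℬ j)), (a : U) ⊗ₜ[ℝ] (b : V) ∈ P) :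
    tensorGrading 𝒜 ℬ k ≤ P := by
  refine iSup_le fun i => iSup_le fun j => iSup_le fun hij => ?_
  rintro x ⟨y, rfl⟩
  induction y with
  | zero => rw [map_zero]; exact P.zero_mem
  | tmul a b => simpa using h i j hij a b
  | add y z hy hz => rw [map_add]; exact P.add_mem hy hz

theorem tg_range_bot_left {i j : ℕ} (h : 𝒜 i = ⊥) :
    LinearMap.range (TensorProduct.map (𝒜 i).subtype (ℬ j).subtype) = ⊥ := by
  rw [eq_bot_iff]
  rintro x ⟨y, rfl⟩
  induction y with
  | zero => simp
  | tmul a b =>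
    have ha : (a : U) = 0 := by
      have h0 : (a:U) ∈ (⊥ : Submodule ℝ U) := by rw [← h]; exact a.2
      exact (Submodule.mem_bot ℝ).1 h0
    simp [ha]
  | add y z hy hz => rw [map_add]; exact Submodule.add_mem _ hy hz

theorem tg_range_bot_right {i j : ℕ} (h : ℬ j = ⊥) :
    LinearMap.range (TensorProduct.map (𝒜 i).subtype (ℬ j).subtype) = ⊥ := by
  rw [eq_bot_iff]
  rintro x ⟨y, rfl⟩
  induction y with
  | zero => simp
  | tmul a b =>
    have hb : (b : V) = 0 := by
      have h0 : (b:V) ∈ (⊥ : Submodule ℝ V) := by rw [← h]; exact b.2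
      exact (Submodule.mem_bot ℝ).1 h0
    simp [hb]
  | add y z hy hz => rw [map_add]; exact Submodule.add_mem _ hy hz

end Tensor

end LefschetzAux

/-- If (U, μ) and (V, ν) are Lefschetz algebras, then the tensor product
W = U ⊗_ℝ V with element ω = μ⊗1 + 1⊗ν is a Lefschetz algebra (its top degree being
the sum of the top degrees). -/
theorem tensor_product_lefschetz {U V : Type*}
    [CommRing U] [Algebra ℝ U] [CommRing V] [Algebra ℝ V]
    (𝒜 : ℕ → Submodule ℝ U) (ℬ : ℕ → Submodule ℝ V)
    [GradedAlgebra 𝒜] [GradedAlgebra ℬ]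
    (ru rv : ℕ) (hU : IsGradedArtinian U 𝒜 ru) (hV : IsGradedArtinian V ℬ rv)
    (μ : U) (ν : V)
    (hμ : IsLefschetzElem 𝒜 ru μ) (hν : IsLefschetzElem ℬ rv ν) :
    IsLefschetzElem (tensorGrading 𝒜 ℬ) (ru + rv) (μ ⊗ₜ[ℝ] 1 + 1 ⊗ₜ[ℝ] ν) := by
  classical
  obtain ⟨hUfin, -, -, hUtop⟩ := hU
  obtain ⟨hVfin, -, -, hVtop⟩ := hV
  haveI := hUfin
  haveI := hVfin
  haveI : Module.Finite ℝ (U ⊗[ℝ] V) := Module.Finite.tensorProduct ℝ U V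
  obtain ⟨F₁, hF₁deg, hF₁0, hF₁c⟩ := LefschetzAux.exists_lowering hμ hUtop
  obtain ⟨F₂, hF₂deg, hF₂0, hF₂c⟩ := LefschetzAux.exists_lowering hν hVtop
  obtain ⟨ψU, hψU⟩ := LefschetzAux.exists_flip hμ hUtop
  obtain ⟨ψV, hψV⟩ := LefschetzAux.exists_flip hν hVtop
  set r := ru + rv with hrdef
  set ω : U ⊗[ℝ] V := μ ⊗ₜ[ℝ] 1 + 1 ⊗ₜ[ℝ] ν with hωdef
  set D := tensorGrading 𝒜 ℬ with hDdef
  have hDk : ∀ k : ℕ, D k = ⨆ i : ℕ, ⨆ j : ℕ, ⨆ _ : i + j = k,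
      LinearMap.range (TensorProduct.map (𝒜 i).subtype (ℬ j).subtype) := fun k => rfl
  set EW : U ⊗[ℝ] V →ₗ[ℝ] U ⊗[ℝ] V := LinearMap.mulLeft ℝ ω with hEWdef
  set FW : U ⊗[ℝ] V →ₗ[ℝ] U ⊗[ℝ] V :=
    LinearMap.rTensor V F₁ + LinearMap.lTensor U F₂ with hFWdef
  have homul : ∀ (x : U) (y : V), ω * (x ⊗ₜ[ℝ] y) = (μ*x) ⊗ₜ[ℝ] y + x ⊗ₜ[ℝ] (ν*y) := by
    intro x y
    rw [hωdef, add_mul, Algebra.TensorProduct.tmul_mul_tmul,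
      Algebra.TensorProduct.tmul_mul_tmul, one_mul, one_mul]
  have hω1 : ω ∈ D 1 := by
    refine Submodule.add_mem _ ?_ ?_
    · exact LefschetzAux.tmul_mem_tg (by norm_num) hμ.1 (SetLike.one_mem_graded ℬ)
    · exact LefschetzAux.tmul_mem_tg (by norm_num) (SetLike.one_mem_graded 𝒜) hν.1
  have hE : ∀ k, ∀ w ∈ D k, ω * w ∈ D (k+1) := by
    intro k w hw
    have hle : D k ≤ Submodule.comap EW (D (k+1)) := by
      refine LefschetzAux.tg_le ?_
      intro i j hij a b
      simp only [Submodule.mem_comap, hEWdef, LinearMap.mulLeft_apply]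
      rw [homul]
      refine Submodule.add_mem _ ?_ ?_
      · exact LefschetzAux.tmul_mem_tg (by omega) (SetLike.mul_mem_graded hμ.1 a.2) b.2
      · exact LefschetzAux.tmul_mem_tg (by omega) a.2 (SetLike.mul_mem_graded hν.1 b.2)
    have h2 := hle hw
    rw [Submodule.mem_comap, hEWdef, LinearMap.mulLeft_apply] at h2
    exact h2
  have hEpow : ∀ n k, ∀ w ∈ D k, ω^n * w ∈ D (k+n) := by
    intro n
    induction n with
    | zero => intro k w hw; simpa using hw
    | succ n ih =>
      intro k w hw
      have h1 := hE (k+n) _ (ih k w hw)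
      rw [pow_succ', mul_assoc]
      simpa [Nat.add_assoc] using h1
  have hFdeg : ∀ k, ∀ w ∈ D (k+1), FW w ∈ D k := by
    intro k w hw
    have hle : D (k+1) ≤ Submodule.comap FW (D k) := by
      refine LefschetzAux.tg_le ?_
      intro i j hij a b
      simp only [Submodule.mem_comap, hFWdef, LinearMap.add_apply, LinearMap.rTensor_tmul,
        LinearMap.lTensor_tmul]
      refine Submodule.add_mem _ ?_ ?_
      · cases i with
        | zero => rw [hF₁0 _ a.2, TensorProduct.zero_tmul]; exact Submodule.zero_mem _
        | succ i' => exact LefschetzAux.tmul_mem_tg (by omega) (hF₁deg i' _ a.2) b.2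
      · cases j with
        | zero => rw [hF₂0 _ b.2, TensorProduct.tmul_zero]; exact Submodule.zero_mem _
        | succ j' => exact LefschetzAux.tmul_mem_tg (by omega) a.2 (hF₂deg j' _ b.2)
    exact hle hw
  have hF0 : ∀ w ∈ D 0, FW w = 0 := by
    intro w hw
    have hle : D 0 ≤ LinearMap.ker FW := by
      refine LefschetzAux.tg_le ?_
      intro i j hij a b
      have hi : i = 0 := by omega
      have hj : j = 0 := by omega
      subst hi; subst hj
      simp only [LinearMap.mem_ker, hFWdef, LinearMap.add_apply, LinearMap.rTensor_tmul,
        LinearMap.lTensor_tmul]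
      rw [hF₁0 _ a.2, hF₂0 _ b.2, TensorProduct.zero_tmul, TensorProduct.tmul_zero, add_zero]
    exact LinearMap.mem_ker.1 (hle hw)
  have hcommW : ∀ k, ∀ w ∈ D k, EW (FW w) - FW (EW w) = ((2*(k:ℝ)) - r) • w := by
    intro k w hw
    set L : U ⊗[ℝ] V →ₗ[ℝ] U ⊗[ℝ] V :=
      EW ∘ₗ FW - FW ∘ₗ EW - ((2*(k:ℝ)) - r) • LinearMap.id with hLdef
    have hle : D k ≤ LinearMap.ker L := by
      refine LefschetzAux.tg_le ?_
      intro i j hij a b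
      have hc1 : F₁ (μ * a) = μ * (F₁ (a:U)) - ((2*(i:ℝ)) - ru) • (a:U) := by
        rw [← hF₁c i a a.2]; abel
      have hc2 : F₂ (ν * b) = ν * (F₂ (b:V)) - ((2*(j:ℝ)) - rv) • (b:V) := by
        rw [← hF₂c j b b.2]; abel
      have hco : (2*(k:ℝ)) - r = ((2*(i:ℝ)) - ru) + ((2*(j:ℝ)) - rv) := by
        rw [hrdef, ← hij]; push_cast; ring
      have e1 : FW ((a:U) ⊗ₜ[ℝ] (b:V)) = (F₁ a) ⊗ₜ[ℝ] (b:V) + (a:U) ⊗ₜ[ℝ] (F₂ b) := by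
        simp [hFWdef]
      have e2 : FW ((μ * a) ⊗ₜ[ℝ] (b:V)) = (F₁ (μ*a)) ⊗ₜ[ℝ] (b:V) + (μ*(a:U)) ⊗ₜ[ℝ] (F₂ b) := by
        simp [hFWdef]
      have e3 : FW ((a:U) ⊗ₜ[ℝ] (ν * b)) = (F₁ a) ⊗ₜ[ℝ] (ν*(b:V)) + (a:U) ⊗ₜ[ℝ] (F₂ (ν*b)) := by
        simp [hFWdef]
      rw [LinearMap.mem_ker, hLdef]
      simp only [LinearMap.sub_apply, LinearMap.comp_apply, LinearMap.smul_apply,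
        LinearMap.id_apply]
      rw [e1]
      simp only [hEWdef, LinearMap.mulLeft_apply]
      rw [mul_add, homul (F₁ ↑a) ↑b, homul ↑a (F₂ ↑b), homul ↑a ↑b, map_add, e2, e3,
        hc1, hc2, hco]
      simp only [TensorProduct.sub_tmul, TensorProduct.tmul_sub,
        ← TensorProduct.smul_tmul', TensorProduct.tmul_smul]
      module
    have h0 := hle hw
    rw [LinearMap.mem_ker, hLdef] at h0
    simp only [LinearMap.sub_apply, LinearMap.comp_apply, LinearMap.smul_apply,
      LinearMap.id_apply] at h0
    exact sub_eq_zero.1 h0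
  have sl2 : LefschetzAux.Sl2Data D r EW FW := by
    refine ⟨fun m w hw => ?_, hFdeg, hF0, ?_⟩
    · rw [hEWdef, LinearMap.mulLeft_apply]
      exact hE m w hw
    · intro m w hw
      exact hcommW m w hw
  have hEWpow : ∀ (n : ℕ) (x : U ⊗[ℝ] V), (EW^n) x = ω^n * x := by
    intro n
    induction n with
    | zero => intro x; rw [pow_zero, pow_zero, Module.End.one_apply, one_mul]
    | succ n ih =>
      intro x
      rw [pow_succ, Module.End.mul_apply, show EW x = ω * x from rfl, ih, ← mul_assoc,
        ← pow_succ]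
  -- the degree-flipping endomorphism of the tensor product
  set Ψ : U ⊗[ℝ] V →ₗ[ℝ] U ⊗[ℝ] V := TensorProduct.map ψU ψV with hΨdef
  have hmapR : ∀ i j : ℕ, i ≤ ru → j ≤ rv →
      Submodule.map Ψ (LinearMap.range (TensorProduct.map (𝒜 i).subtype (ℬ j).subtype))
        = LinearMap.range (TensorProduct.map (𝒜 (ru-i)).subtype (ℬ (rv-j)).subtype) := by
    intro i j hi hj
    rw [hΨdef, ← LinearMap.range_comp, ← TensorProduct.map_comp]
    rw [TensorProduct.range_map_eq_span_tmul, TensorProduct.range_map_eq_span_tmul]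
    apply le_antisymm
    · rw [Submodule.span_le]
      rintro x ⟨a, b, rfl⟩
      have ha : ψU ((a : U)) ∈ 𝒜 (ru - i) := by
        rw [← hψU i hi]; exact Submodule.mem_map_of_mem a.2
      have hb : ψV ((b : V)) ∈ ℬ (rv - j) := by
        rw [← hψV j hj]; exact Submodule.mem_map_of_mem b.2
      apply Submodule.subset_span
      exact ⟨⟨ψU a, ha⟩, ⟨ψV b, hb⟩, rfl⟩
    · rw [Submodule.span_le]
      rintro x ⟨c, d, rfl⟩
      have hc : (c : U) ∈ Submodule.map ψU (𝒜 i) := by rw [hψU i hi]; exact c.2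
      have hd : (d : V) ∈ Submodule.map ψV (ℬ j) := by rw [hψV j hj]; exact d.2
      obtain ⟨a, ha, hac⟩ := hc
      obtain ⟨b, hb, hbd⟩ := hd
      apply Submodule.subset_span
      refine ⟨⟨a, ha⟩, ⟨b, hb⟩, ?_⟩
      simp [hac, hbd]
  have hRbotU : ∀ i j : ℕ, ru < i →
      LinearMap.range (TensorProduct.map (𝒜 i).subtype (ℬ j).subtype) = ⊥ :=
    fun i j hi => LefschetzAux.tg_range_bot_left (hUtop i hi)
  have hRbotV : ∀ i j : ℕ, rv < j →
      LinearMap.range (TensorProduct.map (𝒜 i).subtype (ℬ j).subtype) = ⊥ :=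
    fun i j hj => LefschetzAux.tg_range_bot_right (hVtop j hj)
  have hmapD : ∀ k, k ≤ r → Submodule.map Ψ (D k) = D (r - k) := by
    intro k hk
    rw [hDk k, hDk (r-k)]
    simp only [Submodule.map_iSup]
    apply le_antisymm
    · refine iSup_le fun i => iSup_le fun j => iSup_le fun hij => ?_
      rcases le_or_gt i ru with hi | hi
      · rcases le_or_gt j rv with hj | hj
        · rw [hmapR i j hi hj]
          exact le_iSup_of_le (ru-i) (le_iSup_of_le (rv-j) (le_iSup_of_le (by omega) le_rfl))
        · rw [hRbotV i j hj, Submodule.map_bot]; exact bot_le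
      · rw [hRbotU i j hi, Submodule.map_bot]; exact bot_le
    · refine iSup_le fun i' => iSup_le fun j' => iSup_le fun h' => ?_
      rcases le_or_gt i' ru with hi | hi
      · rcases le_or_gt j' rv with hj | hj
        · have hmm := hmapR (ru-i') (rv-j') (by omega) (by omega)
          rw [show ru-(ru-i') = i' by omega, show rv-(rv-j') = j' by omega] at hmm
          rw [← hmm]
          exact le_iSup_of_le (ru-i') (le_iSup_of_le (rv-j') (le_iSup_of_le (by omega) le_rfl))
        · rw [hRbotV i' j' hj]; exact bot_le
      · rw [hRbotU i' j' hi]; exact bot_le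
  have hfr : ∀ k, k ≤ r → Module.finrank ℝ (D k) = Module.finrank ℝ (D (r-k)) := by
    intro k hk
    have h1 : Module.finrank ℝ (D (r-k)) ≤ Module.finrank ℝ (D k) := by
      rw [← hmapD k hk]
      exact Submodule.finrank_map_le Ψ (D k)
    have h2 : Module.finrank ℝ (D k) ≤ Module.finrank ℝ (D (r-k)) := by
      have h3 := hmapD (r-k) (by omega)
      rw [show r - (r-k) = k by omega] at h3
      rw [← h3]
      exact Submodule.finrank_map_le Ψ (D (r-k))
    omega
  -- final assembly
  refine ⟨hω1, ?_⟩
  intro i hi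
  have h2i : 2*i ≤ r := by
    rw [Nat.le_div_iff_mul_le (by norm_num)] at hi
    omega
  have hinjD : ∀ w ∈ D i, ω^(r - 2*i) * w = 0 → w = 0 := by
    intro w hw hzero
    refine sl2.core_inj i h2i w hw ?_
    rw [hEWpow]
    exact hzero
  constructor
  · exact hinjD
  · have hle : Submodule.map (LinearMap.mulLeft ℝ (ω^(r-2*i))) (D i) ≤ D (r - i) := by
      rintro x ⟨w, hw, rfl⟩
      simp only [LinearMap.mulLeft_apply]
      have := hEpow (r-2*i) i w hw
      rwa [show i + (r - 2*i) = r - i by omega] at this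
    refine Submodule.eq_of_le_of_finrank_le hle ?_
    set L := LinearMap.mulLeft ℝ (ω^(r-2*i)) with hLdef2
    have hinjL : Function.Injective (L.domRestrict (D i)) := by
      rw [← LinearMap.ker_eq_bot, LinearMap.ker_eq_bot']
      intro m hm
      have hm0 : (m : U ⊗[ℝ] V) = 0 := by
        apply hinjD (m : U ⊗[ℝ] V) m.2
        rw [LinearMap.domRestrict_apply, hLdef2, LinearMap.mulLeft_apply] at hm
        exact hm
      exact Subtype.ext hm0
    calc Module.finrank ℝ (D (r-i)) = Module.finrank ℝ (D i) := (hfr i (by omega)).symm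
      _ = Module.finrank ℝ (LinearMap.range (L.domRestrict (D i))) :=
          (LinearMap.finrank_range_of_inj hinjL).symm
      _ = Module.finrank ℝ (Submodule.map L (D i)) := by rw [LinearMap.range_domRestrict]
      _ ≤ Module.finrank ℝ (Submodule.map L (D i)) := le_rfl
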